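/- Let X and Y be normed linear spaces, q = 1, and suppose the graph of F is convex on a neighbourhood of (x̄,ȳ). Let f be defined from F by f(x,y) := ‖y−ȳ‖ on gph F and +∞ elsewhere. Then \overline{|∂f|}^{>}(x̄,ȳ) = \overline{|∂F|}_1(x̄,ȳ) and \overline{|∂f|}^{>+}(x̄,ȳ) = \overline{|∂F|}^{+}_1(x̄,ȳ). -/

import Mathlib

open Filter Metric Set Topology
open scoped Classical

noncomputable section

namespace HolderPaper

/-- Extended-real quotient `a / d` of an extended real by a nonnegative real,
with the convention that division by `0` yields `⊤`. -/
def equot (a : EReal) (d : ℝ) : EReal := if d = 0 then ⊤ else a * ((d⁻¹ : ℝ) : EReal)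

section MetricDefs

variable {X Y : Type*} [MetricSpace X] [MetricSpace Y]

/-- The asymmetric maximum-type distance `d_ρ((x,y),(u,v)) = max{d(x,u), ρ d(y,v)}`. -/
def drho (ρ : ℝ) (p q : X × Y) : ℝ := max (dist p.1 q.1) (ρ * dist p.2 q.2)

/-- Positive part `f₊`. -/
def fplus (f : X × Y → EReal) (p : X × Y) : EReal := max (f p) 0

/-- Condition (P1): `f(x,y) > 0` whenever `y ≠ ybar`. -/
def P1 (f : X × Y → EReal) (ybar : Y) : Prop := ∀ p : X × Y, p.2 ≠ ybar → 0 < f p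

/-- Condition (P2): `liminf_{f(x,y)↓0} f(x,y)/d(y,ybar) > 0`. -/
def P2 (f : X × Y → EReal) (ybar : Y) : Prop :=
  0 < liminf (fun p : X × Y => equot (f p) (dist p.2 ybar)) ((𝓝[>] (0 : EReal)).comap f)

/-- The lower 0-level set `S(f) = {x | f(x,ybar) ≤ 0}`. -/
def Sf (f : X × Y → EReal) (ybar : Y) : Set X := {x | f (x, ybar) ≤ 0}

/-- The error bound modulus `Er f(xbar,ybar)`:
`liminf` of `f(x,y)/d(x,S(f))` over pairs `(x,y)` with `f(x,y) > 0` as `x → xbar`. -/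
def erMod (f : X × Y → EReal) (xbar : X) (ybar : Y) : EReal :=
  liminf (fun p : X × Y => equot (f p) (infDist p.1 (Sf f ybar)))
    ((𝓝 xbar).comap Prod.fst ⊓ 𝓟 {p : X × Y | 0 < f p})

/-- `f` has an error bound w.r.t. `x` at `(xbar,ybar)` with constant `τ`. -/
def hasErrorBound (f : X × Y → EReal) (xbar : X) (ybar : Y) (τ : ℝ) : Prop :=
  ∃ U ∈ 𝓝 xbar, ∀ x ∈ U, ∀ y : Y, ((τ * infDist x (Sf f ybar) : ℝ) : EReal) ≤ fplus f (x, y)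

/-- The nonlocal ρ-slope `|∇f|◇_ρ(x,y)` (set to `⊤` if `f(x,y) = ⊤`). -/
def nslope (f : X × Y → EReal) (ρ : ℝ) (p : X × Y) : EReal :=
  if f p = ⊤ then ⊤
  else ⨆ (q : X × Y) (_ : q ≠ p), equot (max (f p - fplus f q) 0) (drho ρ p q)

/-- The (local) ρ-slope `|∇f|_ρ(x,y)`. -/
def lslope (f : X × Y → EReal) (ρ : ℝ) (p : X × Y) : EReal :=
  limsup (fun q : X × Y => equot (max (f p - f q) 0) (drho ρ q p)) (𝓝[≠] p)

/-- The uniform strict outer slope `\overline{|∇f|}^◇(xbar,ybar)`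
(`lim_{ρ↓0}` of a quantity nonincreasing in `ρ`, i.e. the supremum over `ρ > 0`). -/
def uss (f : X × Y → EReal) (xbar : X) (ybar : Y) : EReal :=
  ⨆ (ρ : ℝ) (_ : 0 < ρ),
    ⨅ (p : X × Y) (_ : dist p.1 xbar < ρ ∧ 0 < f p ∧ f p < (ρ : EReal)), nslope f ρ p

/-- The strict outer slope `\overline{|∇f|}^{>}(xbar,ybar)`. -/
def sos (f : X × Y → EReal) (xbar : X) (ybar : Y) : EReal :=
  ⨆ (ρ : ℝ) (_ : 0 < ρ),
    ⨅ (p : X × Y) (_ : dist p.1 xbar < ρ ∧ 0 < f p ∧ f p < (ρ : EReal)), lslope f ρ p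

/-- The modified strict outer slope `\overline{|∇f|}^{>+}(xbar,ybar)`. -/
def msos (f : X × Y → EReal) (xbar : X) (ybar : Y) : EReal :=
  ⨆ (ρ : ℝ) (_ : 0 < ρ),
    ⨅ (p : X × Y) (_ : dist p.1 xbar < ρ ∧ 0 < f p ∧ f p < (ρ : EReal)),
      max (lslope f ρ p) (equot (f p) (dist p.1 xbar))

/-- Graph of a set-valued mapping. -/
def gph (F : X → Set Y) : Set (X × Y) := {p | p.2 ∈ F p.1}

/-- Inverse image `F⁻¹(ybar)`. -/
def Finv (F : X → Set Y) (ybar : Y) : Set X := {x | ybar ∈ F x}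

/-- The function `f(x,y) = (d(y,ybar))^q` on `gph F`, `+∞` elsewhere. -/
def fFq (F : X → Set Y) (ybar : Y) (qq : ℝ) : X × Y → EReal :=
  fun p => if p ∈ gph F then ((dist p.2 ybar ^ qq : ℝ) : EReal) else ⊤

/-- The function `f(x,y) = ‖y - ybar‖` on `gph F`, `+∞` elsewhere (case `q = 1`). -/
def fF1 (F : X → Set Y) (ybar : Y) : X × Y → EReal :=
  fun p => if p ∈ gph F then ((dist p.2 ybar : ℝ) : EReal) else ⊤

/-- The ρ-slope `|∇F|_ρ(x,y)` of a set-valued mapping at `(x,y) ∈ gph F`. -/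
def FslopeR (F : X → Set Y) (ybar : Y) (ρ : ℝ) (p : X × Y) : EReal :=
  limsup (fun u : X × Y => equot ((max (dist p.2 ybar - dist u.2 ybar) 0 : ℝ) : EReal) (drho ρ u p))
    (𝓝[gph F \ {p}] p)

/-- The nonlocal (q,ρ)-slope `|∇F|◇_{q,ρ}(x,y)` of a set-valued mapping. -/
def FnslopeQ (F : X → Set Y) (ybar : Y) (qq ρ : ℝ) (p : X × Y) : EReal :=
  ⨆ (u : X × Y) (_ : u ∈ gph F ∧ u ≠ p),
    equot ((max (dist p.2 ybar ^ qq - dist u.2 ybar ^ qq) 0 : ℝ) : EReal) (drho ρ u p)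

/-- The uniform strict q-slope `\overline{|∇F|}^◇_q(xbar,ybar)`. -/
def ussFq (F : X → Set Y) (xbar : X) (ybar : Y) (qq : ℝ) : EReal :=
  ⨆ (ρ : ℝ) (_ : 0 < ρ),
    ⨅ (p : X × Y)
      (_ : p ∈ gph F ∧ dist p.1 xbar < ρ ∧ dist p.2 ybar < ρ ∧ p.1 ∉ Finv F ybar),
      FnslopeQ F ybar qq ρ p

/-- The strict q-slope `\overline{|∇F|}_q(xbar,ybar)`. -/
def sosFq (F : X → Set Y) (xbar : X) (ybar : Y) (qq : ℝ) : EReal :=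
  (qq : EReal) *
    ⨆ (ρ : ℝ) (_ : 0 < ρ),
      ⨅ (p : X × Y)
        (_ : p ∈ gph F ∧ dist p.1 xbar < ρ ∧ dist p.2 ybar < ρ ∧ p.1 ∉ Finv F ybar),
        ((dist p.2 ybar ^ (qq - 1) : ℝ) : EReal) * FslopeR F ybar ρ p

/-- The modified strict q-slope `\overline{|∇F|}^{+}_q(xbar,ybar)`. -/
def msosFq (F : X → Set Y) (xbar : X) (ybar : Y) (qq : ℝ) : EReal :=
  ⨆ (ρ : ℝ) (_ : 0 < ρ),
    ⨅ (p : X × Y)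
      (_ : p ∈ gph F ∧ dist p.1 xbar < ρ ∧ dist p.2 ybar < ρ ∧ p.1 ∉ Finv F ybar),
      max (((qq * dist p.2 ybar ^ (qq - 1) : ℝ) : EReal) * FslopeR F ybar ρ p)
        (equot ((dist p.2 ybar ^ qq : ℝ) : EReal) (dist p.1 xbar))

/-- The Hölder subregularity modulus of order `q`:
`liminf_{x→xbar, x∉F⁻¹(ybar)} (d(ybar,F(x)))^q / d(x,F⁻¹(ybar))`
(with `d(ybar,∅) = +∞`). -/
def srq (F : X → Set Y) (xbar : X) (ybar : Y) (qq : ℝ) : EReal :=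
  liminf
    (fun x : X =>
      equot (if F x = ∅ then ⊤ else ((infDist ybar (F x) ^ qq : ℝ) : EReal))
        (infDist x (Finv F ybar)))
    (𝓝[(Finv F ybar)ᶜ] xbar)

end MetricDefs

section NormedDefs

variable {X Y : Type*} [NormedAddCommGroup X] [NormedSpace ℝ X]
  [NormedAddCommGroup Y] [NormedSpace ℝ Y]

/-- The Fréchet subdifferential of `f : X × Y → ℝ∪{+∞}` at `p`, as a set of pairs of
continuous linear functionals (empty when `f p = ⊤`). -/
def fsubdiff (f : X × Y → EReal) (p : X × Y) : Set ((X →L[ℝ] ℝ) × (Y →L[ℝ] ℝ)) :=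
  {φ | f p ≠ ⊤ ∧ 0 ≤ liminf
      (fun q : X × Y =>
        equot (f q - f p - ((φ.1 (q.1 - p.1) + φ.2 (q.2 - p.2) : ℝ) : EReal)) (dist q p))
      (𝓝[≠] p)}

/-- The subdifferential ρ-slope `|∂f|_ρ(x,y)`. -/
def sdslope (f : X × Y → EReal) (ρ : ℝ) (p : X × Y) : EReal :=
  ⨅ (φ : (X →L[ℝ] ℝ) × (Y →L[ℝ] ℝ)) (_ : φ ∈ fsubdiff f p ∧ ‖φ.2‖ < ρ), (‖φ.1‖ : EReal)

/-- The strict outer subdifferential slope `\overline{|∂f|}^{>}(xbar,ybar)`. -/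
def ssds (f : X × Y → EReal) (xbar : X) (ybar : Y) : EReal :=
  ⨆ (ρ : ℝ) (_ : 0 < ρ),
    ⨅ (p : X × Y) (_ : dist p.1 xbar < ρ ∧ 0 < f p ∧ f p < (ρ : EReal)), sdslope f ρ p

/-- The modified strict outer subdifferential slope `\overline{|∂f|}^{>+}(xbar,ybar)`. -/
def mssds (f : X × Y → EReal) (xbar : X) (ybar : Y) : EReal :=
  ⨆ (ρ : ℝ) (_ : 0 < ρ),
    ⨅ (p : X × Y) (_ : dist p.1 xbar < ρ ∧ 0 < f p ∧ f p < (ρ : EReal)),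
      max (sdslope f ρ p) (equot (f p) (dist p.1 xbar))

/-- `f` is convex on the set `U` (with extended-real values). -/
def convexOnE (U : Set (X × Y)) (f : X × Y → EReal) : Prop :=
  Convex ℝ U ∧ ∀ p ∈ U, ∀ q ∈ U, ∀ t : ℝ, 0 ≤ t → t ≤ 1 →
    f (t • p + (1 - t) • q) ≤ (t : EReal) * f p + ((1 - t : ℝ) : EReal) * f q

/-- The Fréchet normal cone to `Ω ⊂ X × Y` at `p ∈ Ω`. -/
def ncone (Ω : Set (X × Y)) (p : X × Y) : Set ((X →L[ℝ] ℝ) × (Y →L[ℝ] ℝ)) :=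
  {φ | limsup
      (fun q : X × Y =>
        equot (((φ.1 (q.1 - p.1) + φ.2 (q.2 - p.2) : ℝ)) : EReal) (dist q p))
      (𝓝[Ω \ {p}] p) ≤ 0}

/-- The Fréchet coderivative `D*F(x,y)(y*)`. -/
def coderiv (F : X → Set Y) (p : X × Y) (ys : Y →L[ℝ] ℝ) : Set (X →L[ℝ] ℝ) :=
  {xs | (xs, -ys) ∈ ncone (gph F) p}

/-- The (normalized) duality mapping `J(y) = {y* : ‖y*‖ = 1, ⟨y*,y⟩ = ‖y‖}`. -/
def Jdual (y : Y) : Set (Y →L[ℝ] ℝ) := {ys | ‖ys‖ = 1 ∧ ys y = ‖y‖}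

/-- The subdifferential ρ-slope of `F` at `(x,y) ∈ gph F`:
`inf{‖x*‖ : x* ∈ D*F(x,y)(J(y-ybar) + ρ𝔹*)}`. -/
def FsdSlope (F : X → Set Y) (ybar : Y) (ρ : ℝ) (p : X × Y) : EReal :=
  ⨅ (xs : X →L[ℝ] ℝ)
    (_ : ∃ ws : Y →L[ℝ] ℝ, (∃ ys ∈ Jdual (p.2 - ybar), ‖ws - ys‖ ≤ ρ) ∧ xs ∈ coderiv F p ws),
    (‖xs‖ : EReal)

/-- `ξ_q(y) = ‖y - ybar‖^{1-q}/q`. -/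
def xiq (qq : ℝ) (ybar y : Y) : ℝ := ‖y - ybar‖ ^ (1 - qq) / qq

/-- The strict subdifferential q-slope `\overline{|∂F|}_q(xbar,ybar)`. -/
def ssdFq (F : X → Set Y) (xbar : X) (ybar : Y) (qq : ℝ) : EReal :=
  (qq : EReal) *
    ⨆ (ρ : ℝ) (_ : 0 < ρ),
      ⨅ (p : X × Y)
        (_ : p ∈ gph F ∧ ‖p.1 - xbar‖ < ρ ∧ ‖p.2 - ybar‖ < ρ ∧ p.1 ∉ Finv F ybar),
        ((‖p.2 - ybar‖ ^ (qq - 1) : ℝ) : EReal) * FsdSlope F ybar (xiq qq ybar p.2 * ρ) p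

/-- The modified strict subdifferential q-slope `\overline{|∂F|}^{+}_q(xbar,ybar)`. -/
def msdFq (F : X → Set Y) (xbar : X) (ybar : Y) (qq : ℝ) : EReal :=
  ⨆ (ρ : ℝ) (_ : 0 < ρ),
    ⨅ (p : X × Y)
      (_ : p ∈ gph F ∧ ‖p.1 - xbar‖ < ρ ∧ ‖p.2 - ybar‖ < ρ ∧ p.1 ∉ Finv F ybar),
      max (((qq * ‖p.2 - ybar‖ ^ (qq - 1) : ℝ) : EReal) * FsdSlope F ybar (xiq qq ybar p.2 * ρ) p)
        (equot ((‖p.2 - ybar‖ ^ qq : ℝ) : EReal) ‖p.1 - xbar‖)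

/-- The normalized ε-enlargement `J^q_ε(y)` of the q-duality mapping
`J^q(y) = q‖y‖^{q-1} J(y)`. -/
def JqEps (qq ε : ℝ) (y : Y) : Set (Y →L[ℝ] ℝ) :=
  {ws | ∃ us ∈ Jdual y, ∃ vs : Y →L[ℝ] ℝ, ‖vs‖ ≤ 1 ∧
    (qq * ‖y‖ ^ (qq - 1)) • us + ε • vs ≠ 0 ∧
    ws = ‖(qq * ‖y‖ ^ (qq - 1)) • us + ε • vs‖⁻¹ • ((qq * ‖y‖ ^ (qq - 1)) • us + ε • vs)}

/-- The constant `β` of Li and Mordukhovich. -/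
def betaLM (F : X → Set Y) (xbar : X) (ybar : Y) (qq : ℝ) : EReal :=
  ⨆ (ε : ℝ) (_ : 0 < ε),
    ⨅ (p : X × Y) (xs : X →L[ℝ] ℝ)
      (_ : p ∈ gph F ∧ p.1 ∉ Finv F ybar ∧ ‖p.1 - xbar‖ < ε ∧
           ‖p.2 - ybar‖ < min ε (‖p.1 - xbar‖ ^ (1 / 2 : ℝ)) ∧
           ∃ ws ∈ JqEps qq ε (p.2 - ybar), xs ∈ coderiv F p ws),
      ((qq * ‖xs‖ * ‖p.2 - ybar‖ ^ (qq - 1) : ℝ) : EReal)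

end NormedDefs

end HolderPaper

namespace HolderPaper
section Proofs

variable {X Y : Type*} [NormedAddCommGroup X] [NormedSpace ℝ X]
  [NormedAddCommGroup Y] [NormedSpace ℝ Y]

lemma equot_coe (r : ℝ) {d : ℝ} (hd : 0 < d) :
    equot (r : EReal) d = ((r / d : ℝ) : EReal) := by
  rw [equot, if_neg hd.ne', ← EReal.coe_mul, div_eq_mul_inv]

lemma equot_top {d : ℝ} (hd : 0 ≤ d) : equot (⊤ : EReal) d = ⊤ := by
  rcases eq_or_lt_of_le hd with h | h
  · rw [equot, if_pos h.symm]
  · rw [equot, if_neg h.ne', EReal.top_mul_of_pos]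
    exact_mod_cast inv_pos.2 h

lemma fF1_mem {F : X → Set Y} {ybar : Y} {p : X × Y} (hp : p ∈ gph F) :
    fF1 F ybar p = ((dist p.2 ybar : ℝ) : EReal) := by rw [fF1, if_pos hp]

lemma fF1_not_mem {F : X → Set Y} {ybar : Y} {p : X × Y} (hp : p ∉ gph F) :
    fF1 F ybar p = ⊤ := by rw [fF1, if_neg hp]

/-- Direction I: the subdifferential slope of `f` is bounded by the coderivative slope of `F`. -/
lemma lemI {F : X → Set Y} {ybar : Y} {ρ ρ' : ℝ} (hρ : ρ < ρ') {p : X × Y} (hp : p ∈ gph F) :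
    sdslope (fF1 F ybar) ρ' p ≤ FsdSlope F ybar ρ p := by
  refine le_iInf fun xs => le_iInf fun hxs => ?_
  obtain ⟨ws, ⟨ys, hysJ, hwsys⟩, hcod⟩ := hxs
  have hJ1 : ‖ys‖ = 1 := hysJ.1
  have hJ2 : ys (p.2 - ybar) = ‖p.2 - ybar‖ := hysJ.2
  have hmem : ((xs, ys - ws) : (X →L[ℝ] ℝ) × (Y →L[ℝ] ℝ)) ∈ fsubdiff (fF1 F ybar) p := by
    refine ⟨by rw [fF1_mem hp]; exact EReal.coe_ne_top _, ?_⟩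
    by_contra hneg
    push_neg at hneg
    obtain ⟨c, hc1, hc2⟩ := EReal.exists_between_coe_real hneg
    have hcneg : c < 0 := EReal.coe_neg'.1 hc2
    have hfreq := Filter.frequently_lt_of_liminf_lt (by isBoundedDefault) hc1
    have hcod' : Filter.limsup
        (fun q : X × Y => equot (((xs (q.1 - p.1) + (-ws) (q.2 - p.2) : ℝ)) : EReal) (dist q p))
        (𝓝[gph F \ {p}] p) < ((-c : ℝ) : EReal) := by
      refine lt_of_le_of_lt hcod ?_
      exact_mod_cast (by linarith : (0:ℝ) < -c)
    have hev := Filter.eventually_lt_of_limsup_lt hcod'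
    rw [eventually_nhdsWithin_iff] at hev
    have hev2 : ∀ᶠ q : X × Y in 𝓝[≠] p,
        (c : EReal) < equot (fF1 F ybar q - fF1 F ybar p -
          ((xs (q.1 - p.1) + (ys - ws) (q.2 - p.2) : ℝ) : EReal)) (dist q p) := by
      rw [eventually_nhdsWithin_iff]
      filter_upwards [hev] with q hq hqne
      have hqne' : q ≠ p := by simpa using hqne
      have hd : 0 < dist q p := dist_pos.2 hqne'
      by_cases hqg : q ∈ gph F
      · have hq' := hq ⟨hqg, by simpa using hqne'⟩
        rw [equot_coe _ hd] at hq'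
        have hq'' : (xs (q.1 - p.1) + (-ws) (q.2 - p.2)) / dist q p < -c := by
          exact_mod_cast hq'
        set hr : ℝ := xs (q.1 - p.1) + (-ws) (q.2 - p.2) with hhr
        set ar : ℝ := dist q.2 ybar - dist p.2 ybar -
          (xs (q.1 - p.1) + (ys - ws) (q.2 - p.2)) with har
        have hnum : fF1 F ybar q - fF1 F ybar p -
            ((xs (q.1 - p.1) + (ys - ws) (q.2 - p.2) : ℝ) : EReal) = ((ar : ℝ) : EReal) := by
          rw [fF1_mem hqg, fF1_mem hp, har, ← EReal.coe_sub, ← EReal.coe_sub]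
        have hkey : ys (q.2 - p.2) = ys (q.2 - ybar) - ys (p.2 - ybar) := by
          rw [← map_sub, sub_sub_sub_cancel_right]
        have hbound : ys (q.2 - ybar) ≤ ‖q.2 - ybar‖ := by
          have h1 := ys.le_opNorm (q.2 - ybar)
          have h2 : ys (q.2 - ybar) ≤ ‖ys (q.2 - ybar)‖ := le_abs_self _
          rw [hJ1, one_mul] at h1
          linarith
        have harge : -hr ≤ ar := by
          have e1 : (ys - ws) (q.2 - p.2) = ys (q.2 - p.2) - ws (q.2 - p.2) :=
            ContinuousLinearMap.sub_apply _ _ _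
          have e2 : (-ws) (q.2 - p.2) = -(ws (q.2 - p.2)) := ContinuousLinearMap.neg_apply _ _
          have e3 : dist q.2 ybar = ‖q.2 - ybar‖ := dist_eq_norm _ _
          have e4 : dist p.2 ybar = ‖p.2 - ybar‖ := dist_eq_norm _ _
          rw [har, hhr, e1, e2, e3, e4, hkey, hJ2]
          linarith
        rw [hnum, equot_coe _ hd]
        have : c < (-hr) / dist q p := by
          rw [neg_div]
          linarith
        have h5 : (-hr) / dist q p ≤ ar / dist q p :=
          div_le_div_of_nonneg_right harge hd.le
        exact_mod_cast lt_of_lt_of_le this h5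
      · rw [fF1_not_mem hqg]
        have : (⊤ : EReal) - fF1 F ybar p -
            ((xs (q.1 - p.1) + (ys - ws) (q.2 - p.2) : ℝ) : EReal) = ⊤ := by
          rw [fF1_mem hp]
          rw [EReal.top_sub_coe, EReal.top_sub_coe]
        rw [this, equot_top hd.le]
        exact lt_of_lt_of_le hc2 le_top
    have := (hfreq.and_eventually hev2).exists
    obtain ⟨q, hlt, hgt⟩ := this
    exact absurd hgt (not_lt.2 hlt.le)
  calc sdslope (fF1 F ybar) ρ' p ≤ ((‖xs‖ : ℝ) : EReal) := by
        refine iInf₂_le (xs, ys - ws) ⟨hmem, ?_⟩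
        calc ‖ys - ws‖ = ‖ws - ys‖ := norm_sub_rev _ _
        _ ≤ ρ := hwsys
        _ < ρ' := hρ
    _ = _ := rfl

end Proofs
section Proofs2

variable {X Y : Type*} [NormedAddCommGroup X] [NormedSpace ℝ X]
  [NormedAddCommGroup Y] [NormedSpace ℝ Y]

/-- Local convex subgradient inequality. -/
lemma lemL {F : X → Set Y} {ybar : Y} {C : Set (X × Y)} (hCconv : Convex ℝ C)
    (hCg : C ⊆ gph F) {p q : X × Y} (hp : p ∈ C) (hq : q ∈ C)
    {φ : (X →L[ℝ] ℝ) × (Y →L[ℝ] ℝ)} (hφ : φ ∈ fsubdiff (fF1 F ybar) p) :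
    φ.1 (q.1 - p.1) + φ.2 (q.2 - p.2) ≤ ‖q.2 - ybar‖ - ‖p.2 - ybar‖ := by
  rcases eq_or_ne q p with rfl | hqp
  · simp
  have hD : (0:ℝ) < dist q p := dist_pos.2 hqp
  set cq : ℝ := φ.1 (q.1 - p.1) + φ.2 (q.2 - p.2) with hcq
  by_contra hcon
  push_neg at hcon
  set K : ℝ := ‖q.2 - ybar‖ - ‖p.2 - ybar‖ - cq with hK
  have hKneg : K < 0 := by rw [hK]; linarith
  have ha : ((K / dist q p : ℝ) : EReal) < 0 := by
    exact_mod_cast div_neg_of_neg_of_pos hKneg hD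
  have hev := Filter.eventually_lt_of_lt_liminf (lt_of_lt_of_le ha hφ.2)
  set γ : ℝ → X × Y := fun t => p + t • (q - p) with hγ
  have hγcont : Continuous γ := by
    exact continuous_const.add (continuous_id.smul continuous_const)
  have htend : Filter.Tendsto γ (𝓝[>] (0:ℝ)) (𝓝[≠] p) := by
    rw [tendsto_nhdsWithin_iff]
    constructor
    · have h0 : γ 0 = p := by simp [hγ]
      exact (hγcont.tendsto' 0 p h0).mono_left nhdsWithin_le_nhds
    · filter_upwards [self_mem_nhdsWithin] with t ht
      have : t • (q - p) ≠ 0 :=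
        smul_ne_zero (ne_of_gt ht) (sub_ne_zero.2 hqp)
      simp only [Set.mem_compl_iff, Set.mem_singleton_iff, hγ]
      intro hcontra
      exact this (by rwa [add_eq_left] at hcontra)
  have hev2 := htend.eventually hev
  have hIoo : Set.Ioo (0:ℝ) 1 ∈ 𝓝[>] (0:ℝ) :=
    Ioo_mem_nhdsGT_of_mem ⟨le_refl _, one_pos⟩
  obtain ⟨t, hgt, ht⟩ := (hev2.and (Filter.eventually_of_mem hIoo fun t ht => ht)).exists
  -- compute G (γ t) and derive contradiction
  have hγC : γ t ∈ C := by
    have : γ t = (1 - t) • p + t • q := by rw [hγ]; module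
    rw [this]
    exact hCconv hp hq (by linarith [ht.2]) ht.1.le (by ring)
  have hγg : γ t ∈ gph F := hCg hγC
  have hpg : p ∈ gph F := hCg hp
  have hγ1 : (γ t).1 = p.1 + t • (q.1 - p.1) := rfl
  have hγ2 : (γ t).2 = p.2 + t • (q.2 - p.2) := rfl
  have hdist : dist (γ t) p = t * dist q p := by
    rw [dist_eq_norm, dist_eq_norm, hγ, add_sub_cancel_left, norm_smul,
      Real.norm_eq_abs, abs_of_pos ht.1]
  set At : ℝ := dist (γ t).2 ybar with hAt
  have hAtle : At ≤ (1 - t) * dist p.2 ybar + t * dist q.2 ybar := by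
    have e : (γ t).2 - ybar = (1 - t) • (p.2 - ybar) + t • (q.2 - ybar) := by
      rw [hγ2]; module
    rw [hAt, dist_eq_norm, dist_eq_norm, dist_eq_norm, e]
    calc ‖(1 - t) • (p.2 - ybar) + t • (q.2 - ybar)‖
        ≤ ‖(1 - t) • (p.2 - ybar)‖ + ‖t • (q.2 - ybar)‖ := norm_add_le _ _
      _ = (1 - t) * ‖p.2 - ybar‖ + t * ‖q.2 - ybar‖ := by
          rw [norm_smul, norm_smul, Real.norm_eq_abs, Real.norm_eq_abs,
            abs_of_pos ht.1, abs_of_nonneg (by linarith [ht.2] : (0:ℝ) ≤ 1 - t)]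
  have hlin : (φ.1 ((γ t).1 - p.1) + φ.2 ((γ t).2 - p.2) : ℝ) = t * cq := by
    rw [hγ1, hγ2, add_sub_cancel_left, add_sub_cancel_left, map_smul, map_smul,
      smul_eq_mul, smul_eq_mul, hcq]
    ring
  have hnum : fF1 F ybar (γ t) - fF1 F ybar p -
      ((φ.1 ((γ t).1 - p.1) + φ.2 ((γ t).2 - p.2) : ℝ) : EReal)
      = ((At - dist p.2 ybar - t * cq : ℝ) : EReal) := by
    rw [fF1_mem hγg, fF1_mem hpg, hlin, ← EReal.coe_sub, ← EReal.coe_sub, hAt]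
  have hdpos : (0:ℝ) < t * dist q p := mul_pos ht.1 hD
  have hGle : equot (fF1 F ybar (γ t) - fF1 F ybar p -
      ((φ.1 ((γ t).1 - p.1) + φ.2 ((γ t).2 - p.2) : ℝ) : EReal)) (dist (γ t) p)
      ≤ ((K / dist q p : ℝ) : EReal) := by
    rw [hnum, hdist, equot_coe _ hdpos, EReal.coe_le_coe_iff]
    have h1 : At - dist p.2 ybar - t * cq ≤ t * K := by
      have e3 : dist q.2 ybar = ‖q.2 - ybar‖ := dist_eq_norm _ _
      have e4 : dist p.2 ybar = ‖p.2 - ybar‖ := dist_eq_norm _ _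
      rw [hK]
      nlinarith [hAtle]
    calc (At - dist p.2 ybar - t * cq) / (t * dist q p)
        ≤ t * K / (t * dist q p) := div_le_div_of_nonneg_right h1 hdpos.le
      _ = K / dist q p := by
          rw [mul_div_mul_left _ _ (ne_of_gt ht.1)]
  exact absurd hGle (not_le.2 hgt)

end Proofs2
section Proofs3

variable {X Y : Type*} [NormedAddCommGroup X] [NormedSpace ℝ X]
  [NormedAddCommGroup Y] [NormedSpace ℝ Y]

set_option maxHeartbeats 1000000 in
/-- Direction II (convex case): the coderivative slope bounds the subdifferential slope. -/
lemma lemII {F : X → Set Y} {xbar : X} {ybar : Y} {ε : ℝ}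
    (hCconv : Convex ℝ (gph F ∩ Metric.ball ((xbar, ybar) : X × Y) ε))
    {σ : ℝ} (hσ : 0 < σ) (hσε : σ ≤ ε / 2) {p : X × Y} (hpg : p ∈ gph F)
    (hpx : dist p.1 xbar < σ) (hpy : dist p.2 ybar < σ) (hpne : p.2 ≠ ybar) :
    FsdSlope F ybar σ p ≤ sdslope (fF1 F ybar) σ p := by
  have hε : 0 < ε := by linarith
  set C : Set (X × Y) := gph F ∩ Metric.ball ((xbar, ybar) : X × Y) ε with hC
  have hpball : p ∈ Metric.ball ((xbar, ybar) : X × Y) ε := by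
    rw [Metric.mem_ball, Prod.dist_eq]
    exact max_lt (by linarith) (by linarith)
  have hpC : p ∈ C := ⟨hpg, hpball⟩
  refine le_iInf fun φ => le_iInf fun hφc => ?_
  obtain ⟨hφ, hφ2⟩ := hφc
  have hsub : ∀ q ∈ C, φ.1 (q.1 - p.1) + φ.2 (q.2 - p.2) ≤ ‖q.2 - ybar‖ - ‖p.2 - ybar‖ :=
    fun q hq => lemL hCconv (fun z hz => hz.1) hpC hq hφ
  -- separation construction
  set φ₀ : Y → ℝ := fun w => ‖p.2 - ybar + w‖ - ‖p.2 - ybar‖ with hφ₀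
  set A : Set (Y × ℝ) := {z | φ₀ z.1 < z.2} with hA
  set Bs : Set (Y × ℝ) := {z | ∃ u, (u, p.2 + z.1) ∈ C ∧ z.2 ≤ φ.1 (u - p.1) + φ.2 z.1} with hBs
  have hφ₀conv : ∀ (w₁ w₂ : Y) (θ : ℝ), 0 ≤ θ → θ ≤ 1 →
      φ₀ (θ • w₁ + (1 - θ) • w₂) ≤ θ * φ₀ w₁ + (1 - θ) * φ₀ w₂ := by
    intro w₁ w₂ θ hθ0 hθ1
    have e : p.2 - ybar + (θ • w₁ + (1 - θ) • w₂)
        = θ • (p.2 - ybar + w₁) + (1 - θ) • (p.2 - ybar + w₂) := by module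
    simp only [hφ₀]
    rw [e]
    calc ‖θ • (p.2 - ybar + w₁) + (1 - θ) • (p.2 - ybar + w₂)‖ - ‖p.2 - ybar‖
        ≤ θ * ‖p.2 - ybar + w₁‖ + (1 - θ) * ‖p.2 - ybar + w₂‖ - ‖p.2 - ybar‖ := by
          have := norm_add_le (θ • (p.2 - ybar + w₁)) ((1 - θ) • (p.2 - ybar + w₂))
          rw [norm_smul, norm_smul, Real.norm_eq_abs, Real.norm_eq_abs,
            abs_of_nonneg hθ0, abs_of_nonneg (by linarith)] at this
          linarith
      _ = θ * (‖p.2 - ybar + w₁‖ - ‖p.2 - ybar‖) + (1 - θ) * (‖p.2 - ybar + w₂‖ - ‖p.2 - ybar‖) := by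
          ring
  have hAconv : Convex ℝ A := by
    intro z₁ hz₁ z₂ hz₂ a b ha hb hab
    simp only [hA, Set.mem_setOf_eq] at hz₁ hz₂ ⊢
    have hb1 : b = 1 - a := by linarith
    subst hb1
    have hconv := hφ₀conv z₁.1 z₂.1 a ha (by linarith)
    have hstrict : a * φ₀ z₁.1 + (1 - a) * φ₀ z₂.1 < a * z₁.2 + (1 - a) * z₂.2 := by
      rcases eq_or_lt_of_le ha with h3 | h3
      · have ha0 : a = 0 := h3.symm
        subst ha0
        simpa using hz₂
      · rcases eq_or_lt_of_le (by linarith : (0:ℝ) ≤ 1 - a) with h4 | h4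
        · have ha1 : a = 1 := by linarith
          subst ha1
          simpa using hz₁
        · nlinarith [mul_lt_mul_of_pos_left hz₁ h3, mul_lt_mul_of_pos_left hz₂ h4]
    have e1 : (a • z₁ + (1 - a) • z₂).1 = a • z₁.1 + (1 - a) • z₂.1 := rfl
    have e2 : (a • z₁ + (1 - a) • z₂).2 = a * z₁.2 + (1 - a) * z₂.2 := rfl
    rw [e1, e2]
    exact lt_of_le_of_lt hconv hstrict
  have hAopen : IsOpen A := by
    have hc : Continuous fun z : Y × ℝ => φ₀ z.1 :=
      ((continuous_const.add continuous_fst).norm.sub continuous_const)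
    exact isOpen_lt hc continuous_snd
  have hBconv : Convex ℝ Bs := by
    rintro z₁ ⟨u₁, hu₁, ht₁⟩ z₂ ⟨u₂, hu₂, ht₂⟩ a b ha hb hab
    have hb1 : b = 1 - a := by linarith
    subst hb1
    refine ⟨a • u₁ + (1 - a) • u₂, ?_, ?_⟩
    · have c1 : (a • z₁ + (1 - a) • z₂).1 = a • z₁.1 + (1 - a) • z₂.1 := rfl
      have e : ((a • u₁ + (1 - a) • u₂ : X), p.2 + (a • z₁ + (1 - a) • z₂).1)
          = a • ((u₁, p.2 + z₁.1) : X × Y) + (1 - a) • ((u₂, p.2 + z₂.1) : X × Y) := by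
        rw [Prod.ext_iff]
        constructor
        · simp
        · simp only [c1, Prod.snd_add, Prod.smul_snd]
          module
      rw [e]
      exact hCconv hu₁ hu₂ ha (by linarith) (by ring)
    · have e1 : (a • z₁ + (1 - a) • z₂).1 = a • z₁.1 + (1 - a) • z₂.1 := rfl
      have e2 : (a • z₁ + (1 - a) • z₂).2 = a * z₁.2 + (1 - a) * z₂.2 := rfl
      have e3 : (a • u₁ + (1 - a) • u₂) - p.1 = a • (u₁ - p.1) + (1 - a) • (u₂ - p.1) := by
        module
      rw [e1, e2, e3, map_add, map_smul, map_smul, map_add, map_smul, map_smul]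
      simp only [smul_eq_mul]
      have g1 := mul_le_mul_of_nonneg_left ht₁ ha
      have g2 := mul_le_mul_of_nonneg_left ht₂ (by linarith : (0:ℝ) ≤ 1 - a)
      linarith
  have hdisj : Disjoint A Bs := by
    rw [Set.disjoint_left]
    rintro z hzA ⟨u, huC, hut⟩
    have h1 := hsub (u, p.2 + z.1) huC
    simp only at h1
    have e : p.2 + z.1 - p.2 = z.1 := by abel
    rw [e] at h1
    have e2 : ‖p.2 + z.1 - ybar‖ = ‖p.2 - ybar + z.1‖ := by
      congr 1; abel
    rw [e2] at h1
    simp only [hA, Set.mem_setOf_eq, hφ₀] at hzA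
    linarith
  obtain ⟨Φ, s, hΦA, hΦB⟩ := geometric_hahn_banach_open hAconv hAopen hBconv hdisj
  set ℓ : Y →L[ℝ] ℝ := Φ.comp (ContinuousLinearMap.inl ℝ Y ℝ) with hℓ
  set α : ℝ := Φ (0, 1) with hα
  have hkey : ∀ (w : Y) (t : ℝ), Φ (w, t) = ℓ w + t * α := by
    intro w t
    have e : ((w, t) : Y × ℝ) = (w, 0) + t • ((0:Y), (1:ℝ)) := by
      simp [Prod.ext_iff]
    rw [e, map_add, map_smul, smul_eq_mul, hα, hℓ]
    rfl
  have hB00 : ((0:Y), (0:ℝ)) ∈ Bs := by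
    refine ⟨p.1, ?_, ?_⟩
    · simpa using hpC
    · simp
  have hs0 : s ≤ 0 := by
    have := hΦB _ hB00
    rwa [show ((0:Y), (0:ℝ)) = (0 : Y × ℝ) from rfl, map_zero] at this
  have hαneg : α < 0 := by
    have h01 : ((0:Y), (1:ℝ)) ∈ A := by
      simp [hA, hφ₀]
    have := hΦA _ h01
    rw [hkey] at this
    simp only [map_zero, one_mul] at this
    linarith
  have hs0' : 0 ≤ s := by
    by_contra hscon
    push_neg at hscon
    have hα0 : α ≠ 0 := ne_of_lt hαneg
    have ht : (0:ℝ) < s / (2 * α) := div_pos_iff.2 (Or.inr ⟨by linarith, by linarith⟩)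
    have hmem : ((0:Y), s / (2 * α)) ∈ A := by
      simp only [hA, Set.mem_setOf_eq, hφ₀]
      simpa using ht
    have h2 := hΦA _ hmem
    rw [hkey] at h2
    simp only [map_zero, zero_add] at h2
    have e : s / (2 * α) * α = s / 2 := by
      field_simp
    rw [e] at h2
    linarith
  have hs : s = 0 := le_antisymm hs0 hs0'
  have hnα : 0 < -α := by linarith
  have hupper : ∀ w, ℓ w ≤ (-α) * φ₀ w := by
    intro w
    by_contra hcon
    push_neg at hcon
    have h1 : φ₀ w < ℓ w / (-α) := (lt_div_iff₀ hnα).2 (by linarith [hcon])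
    obtain ⟨t, ht1, ht2⟩ := exists_between h1
    have hmem : (w, t) ∈ A := ht1
    have h3 := hΦA _ hmem
    rw [hkey, hs] at h3
    have h2 : t * (-α) < ℓ w := (lt_div_iff₀ hnα).1 ht2
    linarith
  have hlower : ∀ (w : Y) (u : X), (u, p.2 + w) ∈ C →
      (-α) * (φ.1 (u - p.1) + φ.2 w) ≤ ℓ w := by
    intro w u huC
    have hmem : (w, φ.1 (u - p.1) + φ.2 w) ∈ Bs := ⟨u, huC, le_refl _⟩
    have h3 := hΦB _ hmem
    rw [hkey, hs] at h3
    nlinarith [h3]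
  set ys : Y →L[ℝ] ℝ := (-α)⁻¹ • ℓ with hys
  have hysapp : ∀ w, ys w = (-α)⁻¹ * ℓ w := fun w => rfl
  have hupper' : ∀ w, ys w ≤ φ₀ w := by
    intro w
    rw [hysapp, inv_mul_le_iff₀ hnα]
    exact hupper w
  have hlower' : ∀ (w : Y) (u : X), (u, p.2 + w) ∈ C → φ.1 (u - p.1) + φ.2 w ≤ ys w := by
    intro w u huC
    rw [hysapp, le_inv_mul_iff₀ hnα]
    exact hlower w u huC
  have hφ₀le : ∀ w, φ₀ w ≤ ‖w‖ := by
    intro w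
    simp only [hφ₀]
    have := norm_add_le (p.2 - ybar) w
    linarith
  have hysle : ∀ w, ys w ≤ ‖w‖ := fun w => le_trans (hupper' w) (hφ₀le w)
  have hnormle : ‖ys‖ ≤ 1 := by
    refine ContinuousLinearMap.opNorm_le_bound ys zero_le_one fun w => ?_
    rw [Real.norm_eq_abs, one_mul]
    rcases abs_cases (ys w) with ⟨h, _⟩ | ⟨h, _⟩
    · rw [h]; exact hysle w
    · rw [h]
      have := hysle (-w)
      rw [map_neg, norm_neg] at this
      linarith
  have hzpos : (0:ℝ) < ‖p.2 - ybar‖ := by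
    rw [norm_pos_iff, sub_ne_zero]
    exact hpne
  have hyval : ys (p.2 - ybar) = ‖p.2 - ybar‖ := by
    refine le_antisymm ?_ ?_
    · have h1 := ys.le_opNorm (p.2 - ybar)
      have h2 : ys (p.2 - ybar) ≤ ‖ys (p.2 - ybar)‖ := by
        rw [Real.norm_eq_abs]; exact le_abs_self _
      have h3 : ‖ys‖ * ‖p.2 - ybar‖ ≤ 1 * ‖p.2 - ybar‖ :=
        mul_le_mul_of_nonneg_right hnormle (norm_nonneg _)
      rw [one_mul] at h3
      linarith
    · have := hupper' (ybar - p.2)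
      have e : φ₀ (ybar - p.2) = -‖p.2 - ybar‖ := by
        simp only [hφ₀]
        have e2 : p.2 - ybar + (ybar - p.2) = 0 := by abel
        rw [e2, norm_zero]
        ring
      rw [e] at this
      have e3 : ys (ybar - p.2) = -(ys (p.2 - ybar)) := by
        rw [show ybar - p.2 = -(p.2 - ybar) by abel, map_neg]
      rw [e3] at this
      linarith
  have hnorm1 : ‖ys‖ = 1 := by
    refine le_antisymm hnormle ?_
    have h1 := ys.le_opNorm (p.2 - ybar)
    rw [hyval, norm_norm] at h1
    have := (mul_le_mul_iff_of_pos_right hzpos).1 (by linarith [h1] : 1 * ‖p.2 - ybar‖ ≤ ‖ys‖ * ‖p.2 - ybar‖)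
    exact this
  set ws : Y →L[ℝ] ℝ := ys - φ.2 with hws
  have hcod : φ.1 ∈ coderiv F p ws := by
    show ((φ.1, -ws) : (X →L[ℝ] ℝ) × (Y →L[ℝ] ℝ)) ∈ ncone (gph F) p
    have hev : ∀ᶠ q : X × Y in 𝓝[gph F \ {p}] p,
        equot ((((φ.1, -ws) : (X →L[ℝ] ℝ) × (Y →L[ℝ] ℝ)).1 (q.1 - p.1) +
          ((φ.1, -ws) : (X →L[ℝ] ℝ) × (Y →L[ℝ] ℝ)).2 (q.2 - p.2) : ℝ) : EReal) (dist q p)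
          ≤ (0 : EReal) := by
      have h1 : ∀ᶠ q : X × Y in 𝓝[gph F \ {p}] p, q ∈ gph F \ {p} := self_mem_nhdsWithin
      have h2 : ∀ᶠ q : X × Y in 𝓝[gph F \ {p}] p, q ∈ Metric.ball ((xbar, ybar) : X × Y) ε := by
        refine Filter.Eventually.filter_mono nhdsWithin_le_nhds ?_
        exact Metric.isOpen_ball.eventually_mem hpball
      filter_upwards [h1, h2] with q hq1 hq2
      have hqC : q ∈ C := ⟨hq1.1, hq2⟩
      have hqne : q ≠ p := by simpa using hq1.2
      have hd : (0:ℝ) < dist q p := dist_pos.2 hqne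
      have hr : φ.1 (q.1 - p.1) + (-ws) (q.2 - p.2) ≤ 0 := by
        have e1 : (-ws) (q.2 - p.2) = φ.2 (q.2 - p.2) - ys (q.2 - p.2) := by
          rw [hws]
          simp only [ContinuousLinearMap.neg_apply, ContinuousLinearMap.sub_apply]
          ring
        have := hlower' (q.2 - p.2) q.1 (by
          have e9 : ((q.1, p.2 + (q.2 - p.2)) : X × Y) = q := by
            rw [show p.2 + (q.2 - p.2) = q.2 by abel]
          rwa [e9])
        rw [e1]
        linarith
      show equot (((φ.1 (q.1 - p.1) + (-ws) (q.2 - p.2) : ℝ)) : EReal) (dist q p) ≤ (0:EReal)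
      rw [equot_coe _ hd]
      exact_mod_cast div_nonpos_of_nonpos_of_nonneg hr hd.le
    exact Filter.limsup_le_of_le (by isBoundedDefault) hev
  calc FsdSlope F ybar σ p ≤ ((‖φ.1‖ : ℝ) : EReal) := by
        refine iInf₂_le φ.1 ⟨ws, ⟨ys, ⟨hnorm1, hyval⟩, ?_⟩, hcod⟩
        rw [hws, sub_sub_cancel_left, norm_neg]
        exact hφ2.le
    _ = _ := rfl

end Proofs3
section Proofs4

variable {X Y : Type*} [NormedAddCommGroup X] [NormedSpace ℝ X]
  [NormedAddCommGroup Y] [NormedSpace ℝ Y]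

/-- At points of the graph above a solution, there is no small-vertical subgradient. -/
lemma lemIII {F : X → Set Y} {xbar : X} {ybar : Y} {ε : ℝ}
    (hCconv : Convex ℝ (gph F ∩ Metric.ball ((xbar, ybar) : X × Y) ε))
    {σ : ℝ} (hσ1 : σ ≤ 1) (hσε : σ ≤ ε / 2) (hε : 0 < ε) {p : X × Y} (hpg : p ∈ gph F)
    (hpx : dist p.1 xbar < σ) (hpy : dist p.2 ybar < σ) (hpne : p.2 ≠ ybar)
    (hyb : ybar ∈ F p.1) :
    sdslope (fF1 F ybar) σ p = ⊤ := by
  refine le_antisymm le_top (le_iInf fun φ => le_iInf fun hc => ?_)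
  exfalso
  obtain ⟨hφ, hφ2⟩ := hc
  have hpC : p ∈ gph F ∩ Metric.ball ((xbar, ybar) : X × Y) ε := by
    refine ⟨hpg, ?_⟩
    rw [Metric.mem_ball, Prod.dist_eq]
    exact max_lt (by linarith) (by linarith)
  have hqC : ((p.1, ybar) : X × Y) ∈ gph F ∩ Metric.ball ((xbar, ybar) : X × Y) ε := by
    refine ⟨hyb, ?_⟩
    rw [Metric.mem_ball, Prod.dist_eq]
    exact max_lt (by simpa using (by linarith : dist p.1 xbar < ε)) (by simpa using hε)
  have h := lemL hCconv (fun z hz => hz.1) hpC hqC hφ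
  simp only [sub_self, map_zero, zero_add, norm_zero, zero_sub] at h
  -- h : φ.2 (ybar - p.2) ≤ -‖p.2 - ybar‖
  have hz : (0:ℝ) < ‖ybar - p.2‖ := by
    rw [norm_pos_iff, sub_ne_zero]
    exact Ne.symm hpne
  have h2 : -(‖φ.2‖ * ‖ybar - p.2‖) ≤ φ.2 (ybar - p.2) := by
    have := φ.2.le_opNorm (ybar - p.2)
    rw [Real.norm_eq_abs] at this
    linarith [neg_abs_le (φ.2 (ybar - p.2))]
  have h3 : ‖φ.2‖ * ‖ybar - p.2‖ < 1 * ‖ybar - p.2‖ :=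
    mul_lt_mul_of_pos_right (lt_of_lt_of_le hφ2 hσ1) hz
  rw [one_mul] at h3
  have e : ‖ybar - p.2‖ = ‖p.2 - ybar‖ := norm_sub_rev _ _
  linarith [h, h2, h3, e ▸ h3]

lemma FsdSlope_anti {F : X → Set Y} {ybar : Y} {σ ρ : ℝ} (h : σ ≤ ρ) (p : X × Y) :
    FsdSlope F ybar ρ p ≤ FsdSlope F ybar σ p := by
  refine le_iInf fun xs => le_iInf fun hxs => ?_
  obtain ⟨ws, ⟨ys, hysJ, hwsys⟩, hcod⟩ := hxs
  exact iInf₂_le xs ⟨ws, ⟨ys, hysJ, hwsys.trans h⟩, hcod⟩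

end Proofs4
section Proofs5

variable {X Y : Type*} [NormedAddCommGroup X] [NormedSpace ℝ X]
  [NormedAddCommGroup Y] [NormedSpace ℝ Y]

lemma ssdFq_one (F : X → Set Y) (xbar : X) (ybar : Y) :
    ssdFq F xbar ybar 1 = ⨆ (ρ : ℝ) (_ : 0 < ρ),
      ⨅ (p : X × Y)
        (_ : p ∈ gph F ∧ ‖p.1 - xbar‖ < ρ ∧ ‖p.2 - ybar‖ < ρ ∧ p.1 ∉ Finv F ybar),
        FsdSlope F ybar ρ p := by
  rw [ssdFq]
  simp only [xiq, sub_self, Real.rpow_zero, EReal.coe_one, one_mul, div_one]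

lemma msdFq_one (F : X → Set Y) (xbar : X) (ybar : Y) :
    msdFq F xbar ybar 1 = ⨆ (ρ : ℝ) (_ : 0 < ρ),
      ⨅ (p : X × Y)
        (_ : p ∈ gph F ∧ ‖p.1 - xbar‖ < ρ ∧ ‖p.2 - ybar‖ < ρ ∧ p.1 ∉ Finv F ybar),
        max (FsdSlope F ybar ρ p) (equot ((‖p.2 - ybar‖ : ℝ) : EReal) ‖p.1 - xbar‖) := by
  rw [msdFq]
  simp only [xiq, sub_self, Real.rpow_zero, Real.rpow_one, mul_one, one_mul, div_one,
    EReal.coe_one]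

lemma fcond_iff {F : X → Set Y} {ybar : Y} {xbar : X} {ρ : ℝ} {p : X × Y} :
    (dist p.1 xbar < ρ ∧ 0 < fF1 F ybar p ∧ fF1 F ybar p < (ρ : EReal)) ↔
      (p ∈ gph F ∧ dist p.1 xbar < ρ ∧ p.2 ≠ ybar ∧ dist p.2 ybar < ρ) := by
  by_cases hp : p ∈ gph F
  · rw [fF1_mem hp]
    constructor
    · rintro ⟨h1, h2, h3⟩
      refine ⟨hp, h1, ?_, ?_⟩
      · rw [← dist_pos (x := p.2) (y := ybar)]
        exact_mod_cast h2
      · exact_mod_cast h3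
    · rintro ⟨_, h1, h2, h3⟩
      exact ⟨h1, by exact_mod_cast dist_pos.2 h2, by exact_mod_cast h3⟩
  · rw [fF1_not_mem hp]
    constructor
    · rintro ⟨h1, h2, h3⟩
      exact absurd h3 (not_top_lt)
    · rintro ⟨h, _⟩
      exact absurd h hp

end Proofs5

/-- `q = 1`, `gph F` convex near `(xbar,ybar)`; with `f := ‖· - ybar‖` on `gph F`
and `+∞` elsewhere: `\overline{|∂f|}^{>} = \overline{|∂F|}_1` and
`\overline{|∂f|}^{>+} = \overline{|∂F|}^{+}_1`. -/
theorem statement13 {X Y : Type*} [NormedAddCommGroup X] [NormedSpace ℝ X] [NormedAddCommGroup Y] [NormedSpace ℝ Y]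
    (F : X → Set Y) (xbar : X) (ybar : Y) (hbar : (xbar, ybar) ∈ gph F)
    (hconv : ∃ U ∈ 𝓝 (xbar, ybar), Convex ℝ (gph F ∩ U)) :
    ssds (fF1 F ybar) xbar ybar = ssdFq F xbar ybar 1 ∧
    mssds (fF1 F ybar) xbar ybar = msdFq F xbar ybar 1 := by
  obtain ⟨U, hU, hUconv⟩ := hconv
  obtain ⟨ε, hε, hball⟩ := Metric.mem_nhds_iff.1 hU
  have hCconv : Convex ℝ (gph F ∩ Metric.ball ((xbar, ybar) : X × Y) ε) := by
    have e : gph F ∩ Metric.ball ((xbar, ybar) : X × Y) ε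
        = (gph F ∩ U) ∩ Metric.ball ((xbar, ybar) : X × Y) ε := by
      ext z
      constructor
      · rintro ⟨h1, h2⟩; exact ⟨⟨h1, hball h2⟩, h2⟩
      · rintro ⟨⟨h1, _⟩, h2⟩; exact ⟨h1, h2⟩
    rw [e]
    exact hUconv.inter (convex_ball _ _)
  constructor
  · -- strict slopes
    rw [ssdFq_one, ssds]
    apply le_antisymm
    · refine iSup₂_le fun ρ' hρ' => ?_
      refine le_iSup₂_of_le (ρ' / 2) (by linarith) ?_
      refine le_iInf fun p => le_iInf fun hp => ?_
      obtain ⟨hpg, hpx, hpy, hpf⟩ := hp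
      have hpne : p.2 ≠ ybar := by
        intro h
        exact hpf (show ybar ∈ F p.1 from h ▸ hpg)
      have h1 : (⨅ (p : X × Y) (_ : dist p.1 xbar < ρ' ∧ 0 < fF1 F ybar p ∧
          fF1 F ybar p < (ρ' : EReal)), sdslope (fF1 F ybar) ρ' p)
          ≤ sdslope (fF1 F ybar) ρ' p := by
        refine iInf₂_le p ?_
        refine fcond_iff.2 ⟨hpg, ?_, hpne, ?_⟩
        · rw [dist_eq_norm]; linarith
        · rw [dist_eq_norm]; linarith
      exact le_trans h1 (lemI (by linarith) hpg)
    · refine iSup₂_le fun ρ hρ => ?_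
      have hσpos : (0:ℝ) < min ρ (min 1 (ε / 2)) := lt_min hρ (lt_min one_pos (by linarith))
      set σ : ℝ := min ρ (min 1 (ε / 2)) with hσdef
      have hσρ : σ ≤ ρ := min_le_left _ _
      have hσ1 : σ ≤ 1 := le_trans (min_le_right _ _) (min_le_left _ _)
      have hσε : σ ≤ ε / 2 := le_trans (min_le_right _ _) (min_le_right _ _)
      refine le_iSup₂_of_le σ hσpos ?_
      refine le_iInf fun p => le_iInf fun hp => ?_
      obtain ⟨hpg, hpx, hpne, hpy⟩ := fcond_iff.1 hp
      by_cases hyb : ybar ∈ F p.1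
      · rw [lemIII hCconv hσ1 hσε hε hpg hpx hpy hpne hyb]
        exact le_top
      · have hB : (⨅ (q : X × Y) (_ : q ∈ gph F ∧ ‖q.1 - xbar‖ < ρ ∧ ‖q.2 - ybar‖ < ρ ∧
            q.1 ∉ Finv F ybar), FsdSlope F ybar ρ q) ≤ FsdSlope F ybar ρ p := by
          refine iInf₂_le p ⟨hpg, ?_, ?_, hyb⟩
          · rw [← dist_eq_norm]; linarith
          · rw [← dist_eq_norm]; linarith
        exact le_trans (le_trans hB (FsdSlope_anti hσρ p))
          (lemII hCconv hσpos hσε hpg hpx hpy hpne)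
  · -- modified strict slopes
    rw [msdFq_one, mssds]
    apply le_antisymm
    · refine iSup₂_le fun ρ' hρ' => ?_
      refine le_iSup₂_of_le (ρ' / 2) (by linarith) ?_
      refine le_iInf fun p => le_iInf fun hp => ?_
      obtain ⟨hpg, hpx, hpy, hpf⟩ := hp
      have hpne : p.2 ≠ ybar := by
        intro h
        exact hpf (show ybar ∈ F p.1 from h ▸ hpg)
      have heq : equot (fF1 F ybar p) (dist p.1 xbar)
          = equot ((‖p.2 - ybar‖ : ℝ) : EReal) ‖p.1 - xbar‖ := by
        rw [fF1_mem hpg, dist_eq_norm, dist_eq_norm]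
      have h1 : (⨅ (p : X × Y) (_ : dist p.1 xbar < ρ' ∧ 0 < fF1 F ybar p ∧
          fF1 F ybar p < (ρ' : EReal)),
          max (sdslope (fF1 F ybar) ρ' p) (equot (fF1 F ybar p) (dist p.1 xbar)))
          ≤ max (sdslope (fF1 F ybar) ρ' p) (equot (fF1 F ybar p) (dist p.1 xbar)) := by
        refine iInf₂_le p ?_
        refine fcond_iff.2 ⟨hpg, ?_, hpne, ?_⟩
        · rw [dist_eq_norm]; linarith
        · rw [dist_eq_norm]; linarith
      refine le_trans h1 ?_
      rw [heq]
      exact max_le_max (lemI (by linarith) hpg) (le_refl _)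
    · refine iSup₂_le fun ρ hρ => ?_
      have hσpos : (0:ℝ) < min ρ (min 1 (ε / 2)) := lt_min hρ (lt_min one_pos (by linarith))
      set σ : ℝ := min ρ (min 1 (ε / 2)) with hσdef
      have hσρ : σ ≤ ρ := min_le_left _ _
      have hσ1 : σ ≤ 1 := le_trans (min_le_right _ _) (min_le_left _ _)
      have hσε : σ ≤ ε / 2 := le_trans (min_le_right _ _) (min_le_right _ _)
      refine le_iSup₂_of_le σ hσpos ?_
      refine le_iInf fun p => le_iInf fun hp => ?_
      obtain ⟨hpg, hpx, hpne, hpy⟩ := fcond_iff.1 hp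
      by_cases hyb : ybar ∈ F p.1
      · rw [lemIII hCconv hσ1 hσε hε hpg hpx hpy hpne hyb]
        exact le_trans le_top (le_max_left _ _)
      · have heq : equot (fF1 F ybar p) (dist p.1 xbar)
            = equot ((‖p.2 - ybar‖ : ℝ) : EReal) ‖p.1 - xbar‖ := by
          rw [fF1_mem hpg, dist_eq_norm, dist_eq_norm]
        have hB : (⨅ (q : X × Y) (_ : q ∈ gph F ∧ ‖q.1 - xbar‖ < ρ ∧ ‖q.2 - ybar‖ < ρ ∧
            q.1 ∉ Finv F ybar),
            max (FsdSlope F ybar ρ q) (equot ((‖q.2 - ybar‖ : ℝ) : EReal) ‖q.1 - xbar‖))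
            ≤ max (FsdSlope F ybar ρ p) (equot ((‖p.2 - ybar‖ : ℝ) : EReal) ‖p.1 - xbar‖) := by
          refine iInf₂_le p ⟨hpg, ?_, ?_, hyb⟩
          · rw [← dist_eq_norm]; linarith
          · rw [← dist_eq_norm]; linarith
        refine le_trans hB ?_
        rw [← heq]
        exact max_le_max (le_trans (FsdSlope_anti hσρ p)
          (lemII hCconv hσpos hσε hpg hpx hpy hpne)) (le_refl _)

end HolderPaper
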